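/- Let N be an odd positive integer, h = 1/(N+1), and let U_0, …, U_{N+1} be real numbers with U_0 = U_{N+1} = 0 satisfying the bi-grid condition U_{2j+1} = (U_{2j} + U_{2j+2})/2 for 0 ≤ j ≤ (N−1)/2. Then for every 1 ≤ k ≤ N: cos²((N+1−k)πh/2)·Σ_{j=1}^{N} U_j·sin(kπjh) + cos²(kπh/2)·Σ_{j=1}^{N} U_j·sin((N+1−k)πjh) = 0; i.e., the high-frequency Fourier coefficient at index N+1−k is determined by the low-frequency one at index k. -/

import Mathlib

open Real Finset

private noncomputable def Fm (U : ℕ → ℝ) (a : ℝ) (j : ℕ) : ℝ :=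
  U j * (Real.sin (a / 2) ^ 2 - Real.cos (a / 2) ^ 2 * (-1) ^ j) * Real.sin (a * j)

private noncomputable def Gm (U : ℕ → ℝ) (a : ℝ) (i : ℕ) : ℝ :=
  U (2 * i) * Real.sin (a * (2 * (i : ℝ) - 1)) / 2

private lemma sum_range_two_mul_aux (M : ℕ) (f : ℕ → ℝ) :
    ∑ j ∈ Finset.range (2 * M), f j
      = ∑ i ∈ Finset.range M, (f (2 * i) + f (2 * i + 1)) := by
  induction M with
  | zero => simp
  | succ m ih =>
    have h2 : 2 * (m + 1) = (2 * m + 1) + 1 := by ring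
    rw [h2, Finset.sum_range_succ, Finset.sum_range_succ, ih, Finset.sum_range_succ]
    ring

private lemma main_aux (M : ℕ) (hM : 1 ≤ M) (U : ℕ → ℝ) (a : ℝ)
    (hU0 : U 0 = 0) (hUM : U (2 * M) = 0)
    (hbg : ∀ i < M, U (2 * i + 1) = (U (2 * i) + U (2 * i + 2)) / 2) :
    ∑ j ∈ Finset.Icc 1 (2 * M - 1), Fm U a j = 0 := by
  have hp : Real.sin (a / 2) ^ 2 = (1 - Real.cos a) / 2 := by
    have h1 := Real.sin_sq_add_cos_sq (a / 2)
    have h2 := Real.cos_two_mul (a / 2)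
    rw [show 2 * (a / 2) = a by ring] at h2
    linarith
  have hq : Real.cos (a / 2) ^ 2 = (1 + Real.cos a) / 2 := by
    have h2 := Real.cos_two_mul (a / 2)
    rw [show 2 * (a / 2) = a by ring] at h2
    linarith
  have hins : Finset.range (2 * M) = insert 0 (Finset.Icc 1 (2 * M - 1)) := by
    ext x
    simp only [Finset.mem_range, Finset.mem_insert, Finset.mem_Icc]
    omega
  have hext : ∑ j ∈ Finset.Icc 1 (2 * M - 1), Fm U a j
      = ∑ j ∈ Finset.range (2 * M), Fm U a j := by
    rw [hins, Finset.sum_insert (by simp)]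
    simp [Fm, hU0]
  rw [hext, sum_range_two_mul_aux]
  have hterm : ∀ i ∈ Finset.range M,
      Fm U a (2 * i) + Fm U a (2 * i + 1) = Gm U a (i + 1) - Gm U a i := by
    intro i hi
    have hiM : i < M := Finset.mem_range.mp hi
    have hbgi := hbg i hiM
    have hpar : ((-1 : ℝ)) ^ (2 * i) = 1 := by
      rw [pow_mul]; norm_num
    have hpar' : ((-1 : ℝ)) ^ (2 * i + 1) = -1 := by
      rw [pow_succ, hpar]; norm_num
    have h2i2 : 2 * (i + 1) = 2 * i + 2 := by ring
    simp only [Fm, Gm, hbgi, hpar, hpar', h2i2]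
    push_cast
    rw [show a * (2 * ((i : ℝ) + 1) - 1) = a * (2 * i) + a by ring,
      show a * (2 * (i : ℝ) + 1) = a * (2 * i) + a by ring,
      show a * (2 * (i : ℝ) - 1) = a * (2 * i) - a by ring,
      Real.sin_add, Real.sin_sub, hp, hq]
    ring
  rw [Finset.sum_congr rfl hterm, Finset.sum_range_sub]
  have hG0 : Gm U a 0 = 0 := by simp [Gm, hU0]
  have hGM : Gm U a M = 0 := by simp [Gm, hUM]
  rw [hG0, hGM, sub_zero]

theorem stmt_14 (N : ℕ) (hodd : Odd N) (hN : 1 ≤ N) (h : ℝ)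
    (hh : h = 1 / ((N : ℝ) + 1))
    (U : ℕ → ℝ) (hU0 : U 0 = 0) (hUN : U (N + 1) = 0)
    (hbigrid : ∀ j : ℕ, j ≤ (N - 1) / 2 →
      U (2 * j + 1) = (U (2 * j) + U (2 * j + 2)) / 2) :
    ∀ k : ℕ, 1 ≤ k → k ≤ N →
      Real.cos (((N : ℝ) + 1 - (k : ℝ)) * Real.pi * h / 2) ^ 2 *
          (∑ j ∈ Finset.Icc 1 N, U j * Real.sin ((k : ℝ) * Real.pi * (j : ℝ) * h))
        + Real.cos ((k : ℝ) * Real.pi * h / 2) ^ 2 *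
          (∑ j ∈ Finset.Icc 1 N,
            U j * Real.sin (((N : ℝ) + 1 - (k : ℝ)) * Real.pi * (j : ℝ) * h))
        = 0 := by
  intro k hk1 hkN
  obtain ⟨M', hM'⟩ := hodd
  have hNM : N = 2 * (M' + 1) - 1 := by omega
  have hNR : ((N : ℝ) + 1) ≠ 0 := by positivity
  set a : ℝ := (k : ℝ) * Real.pi * h with ha
  have hc1 : Real.cos (((N : ℝ) + 1 - (k : ℝ)) * Real.pi * h / 2) ^ 2
      = Real.sin (a / 2) ^ 2 := by
    have hb : ((N : ℝ) + 1 - (k : ℝ)) * Real.pi * h = Real.pi - a := by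
      rw [ha, hh]; field_simp
    rw [hb, show (Real.pi - a) / 2 = Real.pi / 2 - a / 2 by ring,
      Real.cos_pi_div_two_sub]
  have hs2 : ∀ j : ℕ, Real.sin (((N : ℝ) + 1 - (k : ℝ)) * Real.pi * (j : ℝ) * h)
      = -((-1) ^ j * Real.sin (a * j)) := by
    intro j
    have hb : ((N : ℝ) + 1 - (k : ℝ)) * Real.pi * (j : ℝ) * h
        = (j : ℝ) * Real.pi - a * j := by
      rw [ha, hh]; field_simp
    rw [hb, Real.sin_nat_mul_pi_sub]
  have hc2 : Real.cos ((k : ℝ) * Real.pi * h / 2) ^ 2 = Real.cos (a / 2) ^ 2 := by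
    rw [ha]
  rw [hc1, hc2]
  simp only [hs2]
  have hkey : Real.sin (a / 2) ^ 2 *
        (∑ j ∈ Finset.Icc 1 N, U j * Real.sin ((k : ℝ) * Real.pi * (j : ℝ) * h))
      + Real.cos (a / 2) ^ 2 *
        (∑ j ∈ Finset.Icc 1 N, U j * -((-1) ^ j * Real.sin (a * j)))
      = ∑ j ∈ Finset.Icc 1 N, Fm U a j := by
    rw [Finset.mul_sum, Finset.mul_sum, ← Finset.sum_add_distrib]
    refine Finset.sum_congr rfl fun j _ => ?_
    have hab : (k : ℝ) * Real.pi * (j : ℝ) * h = a * j := by rw [ha]; ring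
    rw [hab, Fm]; ring
  rw [hkey, hNM]
  refine main_aux (M' + 1) (by omega) U a hU0 ?_ ?_
  · rw [show 2 * (M' + 1) = N + 1 by omega]; exact hUN
  · intro i hi
    exact hbigrid i (by omega)
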